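/- Let Υ be the monoid presented by generators Y ∪ Y⁻¹ and relations ab = (^{θ(a)}b)·a for all a, b ∈ Y ∪ Y⁻¹, where θ is the boundary map to the free group F̂ and ^{f}b denotes the F̂-action on generators. Let 𝔘 be the submonoid of Υ generated by all elements σ(a)σ(a⁻¹) with a ∈ Y ∪ Y⁻¹ (σ the canonical map from the free monoid to Υ). Then every element of 𝔘 is central in Υ. -/

import Mathlib

section

/- Setup for the monoid `Υ` of Y-sequences of a group presentation `P = (x, r)`:
`x` is the generating set, `R` indexes the relators, `ρ r ∈ F̂ = FreeGroup x` is the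
relator.  A Y-symbol `(ᵘr)^ε` is a triple `(u, r, ε)` with `ε` a Boolean sign. -/
variable (x R : Type) (ρ : R → FreeGroup x)

/-- The set `Y ∪ Y⁻¹` of Y-symbols `(ᵘr)^ε`. -/
abbrev Ysym : Type := FreeGroup x × R × Bool

/-- The boundary `θ((ᵘr)^ε) = u r^ε u⁻¹ ∈ F̂`. -/
def θY : Ysym x R → FreeGroup x :=
  fun a => a.1 * (if a.2.2 then ρ a.2.1 else (ρ a.2.1)⁻¹) * a.1⁻¹

/-- The action of `F̂` on Y-symbols: `ᵛ((ᵘr)^ε) = (ᵛᵘr)^ε`. -/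
def actY : FreeGroup x → Ysym x R → Ysym x R :=
  fun v a => (v * a.1, a.2.1, a.2.2)

/-- The formal inverse `((ᵘr)^ε)⁻¹ = (ᵘr)^{-ε}`. -/
def invY : Ysym x R → Ysym x R := fun a => (a.1, a.2.1, !a.2.2)

/-- The defining relations `a b = (^{θ(a)}b) a` of the monoid `Υ`. -/
def upsilonRel : FreeMonoid (Ysym x R) → FreeMonoid (Ysym x R) → Prop :=
  fun w w' => ∃ a b : Ysym x R,
    w = FreeMonoid.of a * FreeMonoid.of b ∧
    w' = FreeMonoid.of (actY x R (θY x R ρ a) b) * FreeMonoid.of a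

/-- The monoid `Υ` presented by generators `Y ∪ Y⁻¹` and relations
`a b = (^{θ(a)}b) a`. -/
def Upsilon : Type := (conGen (upsilonRel x R ρ)).Quotient

instance : Monoid (Upsilon x R ρ) := by unfold Upsilon; infer_instance

/-- The canonical surjection `σ` from the free monoid on `Y ∪ Y⁻¹` onto `Υ`. -/
def σU : FreeMonoid (Ysym x R) →* Upsilon x R ρ :=
  Con.mk' (conGen (upsilonRel x R ρ))

/-- The submonoid `𝔘` of `Υ` generated by the elements `σ(a)σ(a⁻¹)`. -/
def frakU : Submonoid (Upsilon x R ρ) :=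
  Submonoid.closure
    {s | ∃ a : Ysym x R, s = σU x R ρ (FreeMonoid.of a * FreeMonoid.of (invY x R a))}

lemma sigma_rel (a b : Ysym x R) :
    σU x R ρ (FreeMonoid.of a) * σU x R ρ (FreeMonoid.of b) =
      σU x R ρ (FreeMonoid.of (actY x R (θY x R ρ a) b)) * σU x R ρ (FreeMonoid.of a) := by
  rw [← map_mul, ← map_mul]
  exact Con.eq _ |>.mpr (ConGen.Rel.of _ _ ⟨a, b, rfl, rfl⟩)

lemma theta_inv (a : Ysym x R) : θY x R ρ a * θY x R ρ (invY x R a) = 1 := by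
  unfold θY invY
  cases h : a.2.2 <;> simp [h]

lemma gen_comm (a b : Ysym x R) :
    σU x R ρ (FreeMonoid.of a) * σU x R ρ (FreeMonoid.of (invY x R a)) *
        σU x R ρ (FreeMonoid.of b) =
      σU x R ρ (FreeMonoid.of b) *
        (σU x R ρ (FreeMonoid.of a) * σU x R ρ (FreeMonoid.of (invY x R a))) := by
  have hact : actY x R (θY x R ρ a) (actY x R (θY x R ρ (invY x R a)) b) = b := by
    unfold actY
    simp [← mul_assoc, theta_inv x R ρ a]
  rw [mul_assoc, sigma_rel x R ρ (invY x R a) b, ← mul_assoc,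
    sigma_rel x R ρ a _, hact, mul_assoc]

lemma gen_comm_all (a : Ysym x R) (w : FreeMonoid (Ysym x R)) :
    σU x R ρ (FreeMonoid.of a) * σU x R ρ (FreeMonoid.of (invY x R a)) * σU x R ρ w =
      σU x R ρ w *
        (σU x R ρ (FreeMonoid.of a) * σU x R ρ (FreeMonoid.of (invY x R a))) := by
  induction w using FreeMonoid.inductionOn' with
  | one => simp
  | of_mul b w ih =>
    rw [map_mul, ← mul_assoc, gen_comm x R ρ a b, mul_assoc, ih, ← mul_assoc]

/-- every element of `𝔘` is central in `Υ`. -/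
theorem frakU_central :
    ∀ u ∈ frakU x R ρ, ∀ s : Upsilon x R ρ, u * s = s * u := by
  intro u hu
  refine Submonoid.closure_induction (fun g hg s => ?_) (by simp) ?_ hu
  · -- generators commute with everything
    obtain ⟨a, rfl⟩ := hg
    obtain ⟨w, rfl⟩ := Con.mk'_surjective (c := conGen (upsilonRel x R ρ)) s
    rw [map_mul]
    exact gen_comm_all x R ρ a w
  · intro p q _ _ hp hq s
    rw [mul_assoc, hq s, ← mul_assoc, hp s, mul_assoc]

end
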